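/- arXiv:1509.04199 — 3 statements merged into one kernel-verified Lean document; each statement's English description precedes it below -/
import Mathlib

section
/- Let t ≥ 2 and d ≥ 2 be integers with d ≢ 1 (mod t). Then in the game i-Mark([1,t−1],{d}), the set of P-positions is exactly {qt : 0 ≤ q < d} ∪ {qt+1 : q ≥ d}. In particular the outcome sequence is eventually periodic with period t. -/
/-- The minimum excludant of a finite set of naturals. -/
noncomputable def mex (s : Finset ℕ) : ℕ := sInf {k : ℕ | k ∉ s}

/-- Options of the game i-Mark(S,D) from a heap of `n` tokens:
move to `n - s` for `s ∈ S` (with `1 ≤ s ≤ n`), or to `n / d` for `d ∈ D`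
(with `2 ≤ d` and `d ∣ n`, `n ≥ 1`). -/
def iMarkOptions (S D : Finset ℕ) (n : ℕ) : Finset ℕ :=
  ((S.filter (fun s => 1 ≤ s ∧ s ≤ n)).image (fun s => n - s)) ∪
  ((D.filter (fun d => 2 ≤ d ∧ d ∣ n ∧ 1 ≤ n)).image (fun d => n / d))

theorem iMarkOptions_lt {S D : Finset ℕ} {n m : ℕ} (h : m ∈ iMarkOptions S D n) : m < n := by
  simp only [iMarkOptions, Finset.mem_union, Finset.mem_image, Finset.mem_filter] at h
  rcases h with ⟨s, ⟨_, h1, h2⟩, rfl⟩ | ⟨d, ⟨_, h2, hd, hn⟩, rfl⟩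
  · omega
  · exact Nat.div_lt_self hn h2

/-- The Sprague-Grundy value of a heap of `n` tokens in the game i-Mark(S,D). -/
noncomputable def grundy (S D : Finset ℕ) (n : ℕ) : ℕ :=
  mex ((iMarkOptions S D n).attach.image (fun m => grundy S D m.1))
termination_by n
decreasing_by exact iMarkOptions_lt m.2

/-- `misereP S D n` means `n` is a P-position of i-Mark(S,D) under misère convention:
`n` has at least one option and every option is an N-position. -/
def misereP (S D : Finset ℕ) (n : ℕ) : Prop :=
  (iMarkOptions S D n).Nonempty ∧
    ∀ m : {x // x ∈ iMarkOptions S D n}, ¬ misereP S D m.1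
termination_by n
decreasing_by exact iMarkOptions_lt m.2


lemma mex_eq_zero (s : Finset ℕ) : mex s = 0 ↔ 0 ∉ s := by
  unfold mex
  rw [Nat.sInf_eq_zero]
  constructor
  · rintro (h | h)
    · exact h
    · exfalso
      have hinf : {k : ℕ | k ∉ s}.Infinite := s.finite_toSet.infinite_compl
      rw [h] at hinf
      exact hinf Set.finite_empty
  · exact fun h => Or.inl h

def Pp (t d n : ℕ) : Prop :=
  (∃ q : ℕ, q < d ∧ n = q * t) ∨ (∃ q : ℕ, d ≤ q ∧ n = q * t + 1)

lemma cancel {t a b r1 r2 : ℕ} (h1 : r1 < t) (h2 : r2 < t)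
    (e : a * t + r1 = b * t + r2) : a = b ∧ r1 = r2 := by
  have e1 : (a * t + r1) % t = r1 := by
    rw [Nat.add_comm, Nat.add_mul_mod_self_right, Nat.mod_eq_of_lt h1]
  have e2 : (b * t + r2) % t = r2 := by
    rw [Nat.add_comm, Nat.add_mul_mod_self_right, Nat.mod_eq_of_lt h2]
  have hr : r1 = r2 := by rw [← e1, ← e2, e]
  have ht : 0 < t := lt_of_le_of_lt (Nat.zero_le _) h1
  refine ⟨Nat.eq_of_mul_eq_mul_right ht ?_, hr⟩
  omega

lemma mem_opts {t d n m : ℕ} (ht : 2 ≤ t) (hd : 2 ≤ d) :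
    m ∈ iMarkOptions (Finset.Icc 1 (t-1)) {d} n ↔
      ((∃ s, 1 ≤ s ∧ s ≤ t - 1 ∧ s ≤ n ∧ m = n - s) ∨ (d ∣ n ∧ 1 ≤ n ∧ m = n / d)) := by
  simp only [iMarkOptions, Finset.mem_union, Finset.mem_image, Finset.mem_filter,
    Finset.mem_Icc, Finset.mem_singleton]
  constructor
  · rintro (⟨s, ⟨⟨hs1, hs2⟩, _, hs3⟩, rfl⟩ | ⟨e, ⟨rfl, _, h2, h3⟩, rfl⟩)
    · exact Or.inl ⟨s, hs1, hs2, hs3, rfl⟩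
    · exact Or.inr ⟨h2, h3, rfl⟩
  · rintro (⟨s, hs1, hs2, hs3, rfl⟩ | ⟨h1, h2, rfl⟩)
    · exact Or.inl ⟨s, ⟨⟨hs1, hs2⟩, hs1, hs3⟩, rfl⟩
    · exact Or.inr ⟨d, ⟨rfl, hd, h1, h2⟩, rfl⟩

lemma key (t d : ℕ) (ht : 2 ≤ t) (hd : 2 ≤ d) (h : d % t ≠ 1) (n : ℕ) :
    Pp t d n ↔ ∀ m ∈ iMarkOptions (Finset.Icc 1 (t-1)) {d} n, ¬ Pp t d m := by
  have htd : t - 1 < t := by omega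
  constructor
  · rintro hp m hm
    rw [mem_opts ht hd] at hm
    rcases hp with ⟨q, hq, rfl⟩ | ⟨q, hq, rfl⟩
    · -- n = q*t, q < d
      rcases hm with ⟨s, hs1, hs2, hs3, rfl⟩ | ⟨hdvd, hn1, rfl⟩
      · rintro (⟨q', hq', e⟩ | ⟨q', hq', e⟩)
        · -- q*t - s = q'*t
          have e' : q * t = q' * t + s := by omega
          have := cancel (show (0:ℕ) < t by omega) (show s < t by omega)
            (by omega : q * t + 0 = q' * t + s)
          omega
        · -- q*t - s = q'*t + 1
          by_cases hst : s + 1 = t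
          · have hm1 : (q' + 1) * t = q' * t + t := by ring
            have := cancel (show (0:ℕ) < t by omega) (show (0:ℕ) < t by omega)
              (by omega : q * t + 0 = (q' + 1) * t + 0)
            omega
          · have := cancel (show (0:ℕ) < t by omega) (show s + 1 < t by omega)
              (by omega : q * t + 0 = q' * t + (s + 1))
            omega
      · -- division: q*t = d*k, m = k
        obtain ⟨k, hk⟩ := hdvd
        have hmk : q * t / d = k := by rw [hk]; exact Nat.mul_div_cancel_left k (by omega)
        rw [hmk]
        rintro (⟨q', hq', rfl⟩ | ⟨q', hq', rfl⟩)
        · -- q*t = d*(q'*t)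
          have hm1 : d * (q' * t) = (d * q') * t := by ring
          have := cancel (show (0:ℕ) < t by omega) (show (0:ℕ) < t by omega)
            (by omega : q * t + 0 = (d * q') * t + 0)
          have hq1 : 1 ≤ q' := by
            rcases Nat.eq_zero_or_pos q' with h0 | h0
            · exfalso; subst h0; omega
            · exact h0
          have : d ≤ d * q' := Nat.le_mul_of_pos_right d hq1
          omega
        · -- q*t = d*(q'*t+1)
          have hm1 : d * (q' * t + 1) = (d * q' + d / t) * t + d % t := by
            have := Nat.div_add_mod d t
            have h4 : t * (d / t) = d / t * t := Nat.mul_comm _ _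
            have h2 : (d * q' + d / t) * t = d * q' * t + (d / t) * t := by ring
            have h3 : d * (q' * t + 1) = d * q' * t + d := by ring
            omega
          have := cancel (show (0:ℕ) < t by omega) (Nat.mod_lt d (by omega))
            (by omega : q * t + 0 = (d * q' + d / t) * t + d % t)
          have hq1 : d ≤ d * q' := Nat.le_mul_of_pos_right d (by omega)
          have hq2 : d * q' ≤ d * q' + d / t := Nat.le_add_right _ _
          omega
    · -- n = q*t + 1, q ≥ d
      rcases hm with ⟨s, hs1, hs2, hs3, rfl⟩ | ⟨hdvd, hn1, rfl⟩
      · rintro (⟨q', hq', e⟩ | ⟨q', hq', e⟩)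
        · -- q*t + 1 - s = q'*t
          have := cancel (show (1:ℕ) < t by omega) (show s < t by omega)
            (by omega : q * t + 1 = q' * t + s)
          omega
        · -- q*t + 1 - s = q'*t + 1
          by_cases hst : s + 1 = t
          · have hm1 : (q' + 1) * t = q' * t + t := by ring
            have := cancel (show (1:ℕ) < t by omega) (show (0:ℕ) < t by omega)
              (by omega : q * t + 1 = (q' + 1) * t + 0)
            omega
          · have := cancel (show (1:ℕ) < t by omega) (show 1 + s < t by omega)
              (by omega : q * t + 1 = q' * t + (1 + s))
            omega
      · obtain ⟨k, hk⟩ := hdvd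
        have hmk : (q * t + 1) / d = k := by rw [hk]; exact Nat.mul_div_cancel_left k (by omega)
        rw [hmk]
        rintro (⟨q', hq', rfl⟩ | ⟨q', hq', rfl⟩)
        · have hm1 : d * (q' * t) = (d * q') * t := by ring
          have := cancel (show (1:ℕ) < t by omega) (show (0:ℕ) < t by omega)
            (by omega : q * t + 1 = (d * q') * t + 0)
          omega
        · have hm1 : d * (q' * t + 1) = (d * q' + d / t) * t + d % t := by
            have := Nat.div_add_mod d t
            have h4 : t * (d / t) = d / t * t := Nat.mul_comm _ _
            have h2 : (d * q' + d / t) * t = d * q' * t + (d / t) * t := by ring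
            have h3 : d * (q' * t + 1) = d * q' * t + d := by ring
            omega
          have := cancel (show (1:ℕ) < t by omega) (Nat.mod_lt d (by omega))
            (by omega : q * t + 1 = (d * q' + d / t) * t + d % t)
          omega
  · intro hall
    rcases Nat.eq_zero_or_pos n with rfl | hn1
    · exact Or.inl ⟨0, by omega, by simp⟩
    obtain ⟨q, r, hrt, rfl⟩ : ∃ q r, r < t ∧ n = q * t + r :=
      ⟨n / t, n % t, Nat.mod_lt n (by omega), by rw [Nat.mul_comm]; exact (Nat.div_add_mod n t).symm⟩
    have hqr : q * t + r = q * t + r := rfl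
    rcases Nat.lt_or_ge r 2 with hr2 | hr2
    · rcases Nat.eq_zero_or_pos r with hr0 | hr0
      · -- r = 0, n = q*t
        rcases Nat.lt_or_ge q d with hqd | hqd
        · exact Or.inl ⟨q, hqd, by omega⟩
        rcases Nat.eq_or_lt_of_le hqd with hqd' | hqd'
        · -- q = d : divide, option t
          have hdt : d * t = q * t := by rw [hqd']
          have hdvd : d ∣ q * t + r := ⟨t, by omega⟩
          have hnd : (q * t + r) / d = t := by
            have he : q * t + r = d * t := by omega
            rw [he]; exact Nat.mul_div_cancel_left t (by omega)
          exfalso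
          refine hall ((q * t + r) / d) ((mem_opts ht hd).mpr (Or.inr ⟨hdvd, hn1, rfl⟩)) ?_
          rw [hnd]
          exact Or.inl ⟨1, by omega, by ring⟩
        · -- q > d : subtract t-1, reach (q-1)*t + 1
          obtain ⟨q', rfl⟩ : ∃ q', q = q' + 1 := ⟨q - 1, by omega⟩
          have hm1 : (q' + 1) * t = q' * t + t := by ring
          exfalso
          refine hall ((q' + 1) * t + r - (t - 1))
            ((mem_opts ht hd).mpr (Or.inl ⟨t - 1, by omega, le_refl _, by omega, rfl⟩)) ?_
          refine Or.inr ⟨q', by omega, by omega⟩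
      · -- r = 1, n = q*t + 1
        have hr1 : r = 1 := by omega
        rcases Nat.lt_or_ge q d with hqd | hqd
        · -- subtract 1, reach q*t
          exfalso
          refine hall (q * t + r - 1)
            ((mem_opts ht hd).mpr (Or.inl ⟨1, le_refl _, by omega, by omega, rfl⟩)) ?_
          exact Or.inl ⟨q, hqd, by omega⟩
        · exact Or.inr ⟨q, hqd, by omega⟩
    · -- r ≥ 2
      exfalso
      rcases Nat.lt_or_ge q d with hqd | hqd
      · refine hall (q * t + r - r)
          ((mem_opts ht hd).mpr (Or.inl ⟨r, by omega, by omega, by omega, rfl⟩)) ?_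
        exact Or.inl ⟨q, hqd, by omega⟩
      · refine hall (q * t + r - (r - 1))
          ((mem_opts ht hd).mpr (Or.inl ⟨r - 1, by omega, by omega, by omega, rfl⟩)) ?_
        exact Or.inr ⟨q, hqd, by omega⟩

/-- P-positions of i-Mark([1,t-1],{d}) when d ≢ 1 (mod t). -/
theorem iMark_t_d_Ppositions (t d : ℕ) (ht : 2 ≤ t) (hd : 2 ≤ d) (h : d % t ≠ 1) :
    ∀ n : ℕ, grundy (Finset.Icc 1 (t - 1)) {d} n = 0 ↔
      ((∃ q : ℕ, q < d ∧ n = q * t) ∨ (∃ q : ℕ, d ≤ q ∧ n = q * t + 1)) := by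
  intro n
  induction n using Nat.strong_induction_on with
  | _ n ih =>
    have hkey := key t d ht hd h n
    rw [grundy, mex_eq_zero]
    simp only [Finset.mem_image, Finset.mem_attach, true_and, Subtype.exists, not_exists]
    constructor
    · intro hall
      exact hkey.mpr (fun m hm hp => hall m hm ((ih m (iMarkOptions_lt hm)).mpr hp))
    · intro hp m hm hg
      exact hkey.mp hp m hm ((ih m (iMarkOptions_lt hm)).mp hg)
end

section
/- In the game i-Mark([1,2],{2}), for any position n = 3q with q ≥ 6, g(n) = 3 if and only if q is even and either: the odd part of q is 1 or 5 and the 2-adic valuation of q is even, or the odd part of q is neither 1 nor 5 and the 2-adic valuation of q is odd. -/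
lemma grundy_def (S D : Finset ℕ) (n : ℕ) :
    grundy S D n = mex ((iMarkOptions S D n).image (grundy S D)) := by
  rw [grundy]
  congr 1
  have : (iMarkOptions S D n).attach.image (fun m => grundy S D m.1)
      = ((iMarkOptions S D n).attach.image Subtype.val).image (grundy S D) := by
    rw [Finset.image_image]; rfl
  rw [this, Finset.attach_image_val]

lemma opts_odd (n : ℕ) (h2 : 2 ≤ n) (ho : ¬ 2 ∣ n) :
    iMarkOptions {1,2} {2} n = {n-1, n-2} := by
  ext m
  simp only [iMarkOptions, Finset.mem_union, Finset.mem_image, Finset.mem_filter,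
    Finset.mem_insert, Finset.mem_singleton]
  constructor
  · rintro (⟨s, ⟨hs, _⟩, rfl⟩ | ⟨d, ⟨hd, _, hdvd, _⟩, rfl⟩)
    · rcases hs with rfl | rfl <;> simp
    · subst hd; exact absurd hdvd ho
  · rintro (rfl | rfl)
    · exact Or.inl ⟨1, ⟨Or.inl rfl, by omega⟩, rfl⟩
    · exact Or.inl ⟨2, ⟨Or.inr rfl, by omega⟩, rfl⟩

lemma opts_even (n : ℕ) (h2 : 2 ≤ n) (he : 2 ∣ n) :
    iMarkOptions {1,2} {2} n = {n-1, n-2, n/2} := by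
  ext m
  simp only [iMarkOptions, Finset.mem_union, Finset.mem_image, Finset.mem_filter,
    Finset.mem_insert, Finset.mem_singleton]
  constructor
  · rintro (⟨s, ⟨hs, _⟩, rfl⟩ | ⟨d, ⟨hd, _⟩, rfl⟩)
    · rcases hs with rfl | rfl <;> simp
    · subst hd; simp
  · rintro (rfl | rfl | rfl)
    · exact Or.inl ⟨1, ⟨Or.inl rfl, by omega⟩, rfl⟩
    · exact Or.inl ⟨2, ⟨Or.inr rfl, by omega⟩, rfl⟩
    · exact Or.inr ⟨2, ⟨rfl, by omega, he, by omega⟩, rfl⟩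
lemma mex_eq {s : Finset ℕ} {k : ℕ} (h1 : k ∉ s) (h2 : ∀ j < k, j ∈ s) : mex s = k := by
  have hk : k ∈ {m : ℕ | m ∉ s} := h1
  refine le_antisymm (Nat.sInf_le hk) ?_
  by_contra h
  push_neg at h
  exact (Nat.sInf_mem (⟨k, hk⟩ : Set.Nonempty {m : ℕ | m ∉ s})) (h2 _ h)
lemma gB0 : grundy {1,2} {2} 0 = 0 := by
  rw [grundy_def, show iMarkOptions {1,2} {2} 0 = ∅ from by decide]
  simp only [Finset.image_empty]
  exact mex_eq (by decide) (by omega)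
lemma gB1 : grundy {1,2} {2} 1 = 1 := by
  rw [grundy_def, show iMarkOptions {1,2} {2} 1 = {0} from by decide,
      Finset.image_singleton, gB0]
  exact mex_eq (by decide) (by decide)
lemma gB2 : grundy {1,2} {2} 2 = 2 := by
  rw [grundy_def, show iMarkOptions {1,2} {2} 2 = {1,0,1} from by decide,
      Finset.image_insert, Finset.image_insert, Finset.image_singleton, gB1, gB0]
  exact mex_eq (by decide) (by decide)
lemma gB3 : grundy {1,2} {2} 3 = 0 := by
  rw [grundy_def, show iMarkOptions {1,2} {2} 3 = {2,1} from by decide,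
      Finset.image_insert, Finset.image_singleton, gB2, gB1]
  exact mex_eq (by decide) (by decide)
lemma gB4 : grundy {1,2} {2} 4 = 1 := by
  rw [grundy_def, show iMarkOptions {1,2} {2} 4 = {3,2,2} from by decide,
      Finset.image_insert, Finset.image_insert, Finset.image_singleton, gB3, gB2]
  exact mex_eq (by decide) (by decide)
lemma gB5 : grundy {1,2} {2} 5 = 2 := by
  rw [grundy_def, show iMarkOptions {1,2} {2} 5 = {4,3} from by decide,
      Finset.image_insert, Finset.image_singleton, gB4, gB3]
  exact mex_eq (by decide) (by decide)
lemma gB6 : grundy {1,2} {2} 6 = 3 := by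
  rw [grundy_def, show iMarkOptions {1,2} {2} 6 = {5,4,3} from by decide,
      Finset.image_insert, Finset.image_insert, Finset.image_singleton, gB5, gB4, gB3]
  exact mex_eq (by decide) (by decide)
lemma gB7 : grundy {1,2} {2} 7 = 0 := by
  rw [grundy_def, show iMarkOptions {1,2} {2} 7 = {6,5} from by decide,
      Finset.image_insert, Finset.image_singleton, gB6, gB5]
  exact mex_eq (by decide) (by decide)
lemma gB8 : grundy {1,2} {2} 8 = 2 := by
  rw [grundy_def, show iMarkOptions {1,2} {2} 8 = {7,6,4} from by decide,
      Finset.image_insert, Finset.image_insert, Finset.image_singleton, gB7, gB6, gB4]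
  exact mex_eq (by decide) (by decide)
lemma gB9 : grundy {1,2} {2} 9 = 1 := by
  rw [grundy_def, show iMarkOptions {1,2} {2} 9 = {8,7} from by decide,
      Finset.image_insert, Finset.image_singleton, gB8, gB7]
  exact mex_eq (by decide) (by decide)
lemma gB10 : grundy {1,2} {2} 10 = 0 := by
  rw [grundy_def, show iMarkOptions {1,2} {2} 10 = {9,8,5} from by decide,
      Finset.image_insert, Finset.image_insert, Finset.image_singleton, gB9, gB8, gB5]
  exact mex_eq (by decide) (by decide)
lemma gB11 : grundy {1,2} {2} 11 = 2 := by
  rw [grundy_def, show iMarkOptions {1,2} {2} 11 = {10,9} from by decide,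
      Finset.image_insert, Finset.image_singleton, gB10, gB9]
  exact mex_eq (by decide) (by decide)
lemma gB12 : grundy {1,2} {2} 12 = 1 := by
  rw [grundy_def, show iMarkOptions {1,2} {2} 12 = {11,10,6} from by decide,
      Finset.image_insert, Finset.image_insert, Finset.image_singleton, gB11, gB10, gB6]
  exact mex_eq (by decide) (by decide)
lemma gB13 : grundy {1,2} {2} 13 = 0 := by
  rw [grundy_def, show iMarkOptions {1,2} {2} 13 = {12,11} from by decide,
      Finset.image_insert, Finset.image_singleton, gB12, gB11]
  exact mex_eq (by decide) (by decide)
lemma gB14 : grundy {1,2} {2} 14 = 2 := by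
  rw [grundy_def, show iMarkOptions {1,2} {2} 14 = {13,12,7} from by decide,
      Finset.image_insert, Finset.image_insert, Finset.image_singleton, gB13, gB12, gB7]
  exact mex_eq (by decide) (by decide)
lemma gB15 : grundy {1,2} {2} 15 = 1 := by
  rw [grundy_def, show iMarkOptions {1,2} {2} 15 = {14,13} from by decide,
      Finset.image_insert, Finset.image_singleton, gB14, gB13]
  exact mex_eq (by decide) (by decide)
lemma gB16 : grundy {1,2} {2} 16 = 0 := by
  rw [grundy_def, show iMarkOptions {1,2} {2} 16 = {15,14,8} from by decide,
      Finset.image_insert, Finset.image_insert, Finset.image_singleton, gB15, gB14, gB8]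
  exact mex_eq (by decide) (by decide)
lemma gB17 : grundy {1,2} {2} 17 = 2 := by
  rw [grundy_def, show iMarkOptions {1,2} {2} 17 = {16,15} from by decide,
      Finset.image_insert, Finset.image_singleton, gB16, gB15]
  exact mex_eq (by decide) (by decide)
lemma gB18 : grundy {1,2} {2} 18 = 3 := by
  rw [grundy_def, show iMarkOptions {1,2} {2} 18 = {17,16,9} from by decide,
      Finset.image_insert, Finset.image_insert, Finset.image_singleton, gB17, gB16, gB9]
  exact mex_eq (by decide) (by decide)

def Cq (q : ℕ) : Prop := Even q ∧
      (((ordCompl[2] q = 1 ∨ ordCompl[2] q = 5) ∧ Even (padicValNat 2 q)) ∨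
       ((ordCompl[2] q ≠ 1 ∧ ordCompl[2] q ≠ 5) ∧ Odd (padicValNat 2 q)))

instance : DecidablePred Cq := fun q => by unfold Cq; infer_instance

lemma v2_two_mul {k : ℕ} (hk : k ≠ 0) : padicValNat 2 (2*k) = padicValNat 2 k + 1 := by
  haveI : Fact (Nat.Prime 2) := ⟨Nat.prime_two⟩
  rw [padicValNat.mul two_ne_zero hk, padicValNat.self one_lt_two]
  omega

lemma v2_odd {k : ℕ} (hk : ¬ 2 ∣ k) : padicValNat 2 k = 0 :=
  padicValNat.eq_zero_of_not_dvd hk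

lemma oc_two_mul {k : ℕ} (hk : k ≠ 0) : ordCompl[2] (2*k) = ordCompl[2] k := by
  rw [Nat.factorization_def _ Nat.prime_two, Nat.factorization_def _ Nat.prime_two, v2_two_mul hk, pow_succ, mul_comm (2 ^ padicValNat 2 k) 2,
    Nat.mul_div_mul_left _ _ (by norm_num)]

lemma oc_odd {k : ℕ} (hk : ¬ 2 ∣ k) : ordCompl[2] k = k := by
  rw [Nat.factorization_def _ Nat.prime_two, v2_odd hk, pow_zero, Nat.div_one]

lemma Cq_two_mul {k : ℕ} (hk : 6 ≤ k) : Cq (2*k) ↔ ¬ Cq k := by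
  have hk0 : k ≠ 0 := by omega
  by_cases he : 2 ∣ k
  · obtain ⟨m, rfl⟩ := he
    have hm : m ≠ 0 := by omega
    unfold Cq
    rw [oc_two_mul (by omega), v2_two_mul (by omega)]
    have h1 : Even (2*(2*m)) := ⟨2*m, by ring⟩
    have h2 : Even (2*m) := ⟨m, by ring⟩
    have h3 : Even (padicValNat 2 (2*m) + 1) ↔ ¬ Even (padicValNat 2 (2*m)) := Nat.even_add_one
    have h4 : Odd (padicValNat 2 (2*m) + 1) ↔ ¬ Odd (padicValNat 2 (2*m)) := by
      rw [Nat.odd_add_one, Nat.not_odd_iff_even]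
    have h5 : Odd (padicValNat 2 (2*m)) ↔ ¬ Even (padicValNat 2 (2*m)) := Nat.not_even_iff_odd.symm
    tauto
  · unfold Cq
    rw [oc_two_mul hk0, v2_two_mul hk0, v2_odd he, oc_odd he]
    have h1 : Even (2*k) := ⟨k, by ring⟩
    have h2 : ¬ Even k := by rw [Nat.even_iff]; omega
    have h3 : ¬ Even (0+1 : ℕ) := by decide
    have h4 : Odd (0+1:ℕ) := ⟨0, by ring⟩
    have h5 : k ≠ 1 := by omega
    have h6 : k ≠ 5 := by omega
    tauto

lemma Cq6 : Cq 6 := by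
  have hv : padicValNat 2 6 = 1 := by
    rw [show (6:ℕ) = 2*3 from rfl, v2_two_mul (by norm_num), v2_odd (by norm_num)]
  refine ⟨⟨3, by ring⟩, Or.inr ⟨?_, ?_⟩⟩
  · rw [show ordCompl[2] 6 = 3 by rw [Nat.factorization_def _ Nat.prime_two, hv]; norm_num]; omega
  · rw [hv]; exact ⟨0, by ring⟩

lemma Cq8 : ¬ Cq 8 := by
  have hv : padicValNat 2 8 = 3 := by
    rw [show (8:ℕ) = 2*(2*(2*1)) from rfl, v2_two_mul (by norm_num),
      v2_two_mul (by norm_num), v2_two_mul (by norm_num), v2_odd (by norm_num)]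
  have ho : ordCompl[2] 8 = 1 := by rw [Nat.factorization_def _ Nat.prime_two, hv]; norm_num
  rintro ⟨-, ⟨-, h⟩ | ⟨⟨h, -⟩, -⟩⟩
  · rw [hv] at h; exact (by decide : ¬ Even 3) h
  · exact h (ho)

lemma Cq10 : ¬ Cq 10 := by
  have hv : padicValNat 2 10 = 1 := by
    rw [show (10:ℕ) = 2*5 from rfl, v2_two_mul (by norm_num), v2_odd (by norm_num)]
  have ho : ordCompl[2] 10 = 5 := by rw [Nat.factorization_def _ Nat.prime_two, hv]; norm_num
  rintro ⟨-, ⟨-, h⟩ | ⟨⟨-, h⟩, -⟩⟩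
  · rw [hv] at h; exact (by decide : ¬ Even 1) h
  · exact h ho
lemma key_s6 (n : ℕ) :
    (n % 3 = 1 → 10 ≤ n → grundy {1,2} {2} n = 0) ∧
    (n % 3 = 2 → 5 ≤ n → (grundy {1,2} {2} n = 1 ∨ grundy {1,2} {2} n = 2)) ∧
    (n % 3 = 2 → 20 ≤ n → grundy {1,2} {2} n = 1) ∧
    (n % 3 = 0 → 9 ≤ n → grundy {1,2} {2} n ≠ 0) ∧
    (n % 3 = 0 → 18 ≤ n → grundy {1,2} {2} n = if Cq (n/3) then 3 else 2) := by
  induction n using Nat.strong_induction_on with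
  | _ n ih =>
  have hA : n % 3 = 1 → 10 ≤ n → grundy {1,2} {2} n = 0 := by
    intro h3 h10
    have hA1 : grundy {1,2} {2} (n-1) ≠ 0 :=
      (ih (n-1) (by omega)).2.2.2.1 (by omega) (by omega)
    have hA2 : grundy {1,2} {2} (n-2) ≠ 0 := by
      rcases (ih (n-2) (by omega)).2.1 (by omega) (by omega) with h | h <;> omega
    by_cases he : 2 ∣ n
    · have hh : grundy {1,2} {2} (n/2) ≠ 0 := by
        rcases (ih (n/2) (by omega)).2.1 (by omega) (by omega) with h | h <;> omega
      rw [grundy_def, opts_even n (by omega) he, Finset.image_insert, Finset.image_insert,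
        Finset.image_singleton]
      refine mex_eq ?_ (fun j hj => absurd hj (by omega))
      simp only [Finset.mem_insert, Finset.mem_singleton]
      omega
    · rw [grundy_def, opts_odd n (by omega) he, Finset.image_insert, Finset.image_singleton]
      refine mex_eq ?_ (fun j hj => absurd hj (by omega))
      simp only [Finset.mem_insert, Finset.mem_singleton]
      omega
  have hB2 : n % 3 = 2 → 20 ≤ n → grundy {1,2} {2} n = 1 := by
    intro h3 h20
    have h1 : grundy {1,2} {2} (n-1) = 0 :=
      (ih (n-1) (by omega)).1 (by omega) (by omega)
    have h2 : grundy {1,2} {2} (n-2) = if Cq ((n-2)/3) then 3 else 2 :=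
      (ih (n-2) (by omega)).2.2.2.2 (by omega) (by omega)
    have h2' : grundy {1,2} {2} (n-2) = 3 ∨ grundy {1,2} {2} (n-2) = 2 := by
      rw [h2]; split_ifs <;> simp
    by_cases he : 2 ∣ n
    · have hh : grundy {1,2} {2} (n/2) = 0 :=
        (ih (n/2) (by omega)).1 (by omega) (by omega)
      rw [grundy_def, opts_even n (by omega) he, Finset.image_insert, Finset.image_insert,
        Finset.image_singleton]
      refine mex_eq ?_ ?_
      · simp only [Finset.mem_insert, Finset.mem_singleton]; omega
      · intro j hj
        simp only [Finset.mem_insert, Finset.mem_singleton]; omega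
    · rw [grundy_def, opts_odd n (by omega) he, Finset.image_insert, Finset.image_singleton]
      refine mex_eq ?_ ?_
      · simp only [Finset.mem_insert, Finset.mem_singleton]; omega
      · intro j hj
        simp only [Finset.mem_insert, Finset.mem_singleton]; omega
  have hC0 : n % 3 = 0 → 18 ≤ n → grundy {1,2} {2} n = if Cq (n/3) then 3 else 2 := by
    intro h3 h18
    by_cases h18' : n = 18
    · subst h18'
      rw [gB18, show (18:ℕ)/3 = 6 from rfl, if_pos Cq6]
    have h21 : 21 ≤ n := by omega
    have h1 : grundy {1,2} {2} (n-1) = 1 :=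
      (ih (n-1) (by omega)).2.2.1 (by omega) (by omega)
    have h2 : grundy {1,2} {2} (n-2) = 0 :=
      (ih (n-2) (by omega)).1 (by omega) (by omega)
    by_cases he : 2 ∣ n
    · obtain ⟨k, rfl⟩ : ∃ k, n = 6 * k := ⟨n/6, by omega⟩
      have hk4 : 4 ≤ k := by omega
      rw [grundy_def, opts_even _ (by omega) he, Finset.image_insert, Finset.image_insert,
        Finset.image_singleton, h1, h2, show 6*k/2 = 3*k by omega]
      by_cases hk6 : 6 ≤ k
      · have hh : grundy {1,2} {2} (3*k) = if Cq k then 3 else 2 := by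
          have := (ih (3*k) (by omega)).2.2.2.2 (by omega) (by omega)
          rwa [show 3*k/3 = k by omega] at this
        have hC2 : Cq (6*k/3) ↔ ¬ Cq k := by
          rw [show 6*k/3 = 2*k by omega]; exact Cq_two_mul hk6
        by_cases hc : Cq k
        · rw [if_pos hc] at hh
          rw [hh, if_neg (fun h => (hC2.mp h) hc)]
          exact mex_eq (by decide) (by decide)
        · rw [if_neg hc] at hh
          rw [hh, if_pos (hC2.mpr hc)]
          exact mex_eq (by decide) (by decide)
      · have hk45 : k = 4 ∨ k = 5 := by omega
        rcases hk45 with rfl | rfl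
        · rw [show 3*4 = 12 by omega, gB12, show 6*4/3 = 8 by omega, if_neg Cq8]
          exact mex_eq (by decide) (by decide)
        · rw [show 3*5 = 15 by omega, gB15, show 6*5/3 = 10 by omega, if_neg Cq10]
          exact mex_eq (by decide) (by decide)
    · have hodd : ¬ Even (n/3) := by rw [Nat.even_iff]; omega
      rw [if_neg (fun hc => hodd hc.1)]
      rw [grundy_def, opts_odd n (by omega) he, Finset.image_insert, Finset.image_singleton,
        h1, h2]
      exact mex_eq (by decide) (by decide)
  refine ⟨hA, ?_, hB2, ?_, hC0⟩
  · intro h3 h5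
    by_cases h20 : 20 ≤ n
    · exact Or.inl (hB2 h3 h20)
    · have hcase : n = 5 ∨ n = 8 ∨ n = 11 ∨ n = 14 ∨ n = 17 := by omega
      rcases hcase with rfl | rfl | rfl | rfl | rfl
      · exact Or.inr gB5
      · exact Or.inr gB8
      · exact Or.inr gB11
      · exact Or.inr gB14
      · exact Or.inr gB17
  · intro h3 h9
    by_cases h18 : 18 ≤ n
    · rw [hC0 h3 h18]; split_ifs <;> norm_num
    · have hcase : n = 9 ∨ n = 12 ∨ n = 15 := by omega
      rcases hcase with rfl | rfl | rfl
      · rw [gB9]; norm_num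
      · rw [gB12]; norm_num
      · rw [gB15]; norm_num


/-- Characterization of positions of g-value 3 in i-Mark([1,2],{2}). -/
theorem iMark_12_2_grundy_eq_three (q : ℕ) (hq : 6 ≤ q) :
    grundy {1, 2} {2} (3 * q) = 3 ↔ Even q ∧
      (((ordCompl[2] q = 1 ∨ ordCompl[2] q = 5) ∧ Even (padicValNat 2 q)) ∨
       ((ordCompl[2] q ≠ 1 ∧ ordCompl[2] q ≠ 5) ∧ Odd (padicValNat 2 q))) := by
  have h := (key_s6 (3*q)).2.2.2.2 (by omega) (by omega)
  rw [show 3*q/3 = q by omega] at h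
  rw [h]
  by_cases hc : Cq q
  · rw [if_pos hc]; exact iff_of_true rfl hc
  · rw [if_neg hc]; exact iff_of_false (by norm_num) hc
end

section
/- Let t ≥ 4. In the game i-Mark([1,t−1],{2}), writing n = qt + r with 0 ≤ r ≤ t−1: (i) if (q < 2 and r = 0) or (q ≥ 2 and r = 1) then g(n) = 0; (ii) if q < 2 and r ≠ 0 then g(n) = r; (iii) if q ≥ 2 and r = 2 then g(n) = 2; (iv) if q ≥ 2 and r = 3 then g(n) = 1; (v) if q ≥ 2 and r > 3 then g(n) = r − 1; (vi) if q ≥ 2 and r = 0 then g(n) ∈ {t−1, t}. -/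
-- mex lemmas
lemma compl_nonempty (s : Finset ℕ) : {k : ℕ | k ∉ s}.Nonempty := by
  obtain ⟨a, ha⟩ := s.exists_notMem
  exact ⟨a, ha⟩

lemma mex_notMem (s : Finset ℕ) : mex s ∉ s := Nat.sInf_mem (compl_nonempty s)

lemma mex_le_of_notMem {s : Finset ℕ} {a : ℕ} (h : a ∉ s) : mex s ≤ a := Nat.sInf_le h

lemma mem_of_lt_mex {s : Finset ℕ} {a : ℕ} (h : a < mex s) : a ∈ s := by
  by_contra hc
  exact absurd (mex_le_of_notMem hc) (by omega)

lemma mex_eq_iff {s : Finset ℕ} {a : ℕ} : mex s = a ↔ a ∉ s ∧ ∀ b < a, b ∈ s := by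
  constructor
  · rintro rfl
    exact ⟨mex_notMem s, fun b hb => mem_of_lt_mex hb⟩
  · rintro ⟨h1, h2⟩
    refine le_antisymm (mex_le_of_notMem h1) ?_
    by_contra hc
    exact absurd (h2 _ (by omega)) (mex_notMem s)

lemma le_mex_of {s : Finset ℕ} {a : ℕ} (h : ∀ b < a, b ∈ s) : a ≤ mex s := by
  by_contra hc
  exact absurd (h _ (by omega)) (mex_notMem s)

lemma mex_le_card (s : Finset ℕ) : mex s ≤ s.card := by
  have h : Finset.range (mex s) ⊆ s := by
    intro b hb
    exact mem_of_lt_mex (Finset.mem_range.mp hb)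
  simpa using Finset.card_le_card h

-- Opt
def Opt (t n k : ℕ) : Prop :=
  (∃ s, 1 ≤ s ∧ s ≤ t-1 ∧ s ≤ n ∧ grundy (Finset.Icc 1 (t-1)) {2} (n-s) = k) ∨
  (2 ∣ n ∧ 1 ≤ n ∧ grundy (Finset.Icc 1 (t-1)) {2} (n/2) = k)

lemma mem_iff_opt (t n k : ℕ) :
    k ∈ (iMarkOptions (Finset.Icc 1 (t-1)) {2} n).attach.image
      (fun m => grundy (Finset.Icc 1 (t-1)) {2} m.1) ↔ Opt t n k := by
  simp only [Finset.mem_image, Finset.mem_attach, true_and, Subtype.exists, Opt,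
    iMarkOptions, Finset.mem_union, Finset.mem_filter, Finset.mem_Icc, Finset.mem_singleton]
  constructor
  · rintro ⟨m, hm, rfl⟩
    rcases hm with ⟨s, ⟨⟨hs1, hs2⟩, _, hs3⟩, rfl⟩ | ⟨d, ⟨hd2, _, hdvd, hn⟩, rfl⟩
    · exact Or.inl ⟨s, hs1, hs2, hs3, rfl⟩
    · subst hd2
      exact Or.inr ⟨hdvd, hn, rfl⟩
  · rintro (⟨s, h1, h2, h3, rfl⟩ | ⟨hdvd, hn, rfl⟩)
    · exact ⟨n - s, Or.inl ⟨s, ⟨⟨h1, h2⟩, h1, h3⟩, rfl⟩, rfl⟩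
    · exact ⟨n / 2, Or.inr ⟨2, ⟨rfl, le_refl 2, hdvd, hn⟩, rfl⟩, rfl⟩

lemma grundy_eq_iff {t n a : ℕ} :
    grundy (Finset.Icc 1 (t-1)) {2} n = a ↔ ¬ Opt t n a ∧ ∀ b < a, Opt t n b := by
  rw [grundy, mex_eq_iff]
  simp only [mem_iff_opt]

lemma le_grundy_of {t n a : ℕ} (h : ∀ b < a, Opt t n b) :
    a ≤ grundy (Finset.Icc 1 (t-1)) {2} n := by
  rw [grundy]
  exact le_mex_of (fun b hb => (mem_iff_opt t n b).mpr (h b hb))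

lemma grundy_le (t n : ℕ) (ht : 1 ≤ t) : grundy (Finset.Icc 1 (t-1)) {2} n ≤ t := by
  rw [grundy]
  refine (mex_le_card _).trans ?_
  refine (Finset.card_image_le).trans ?_
  rw [Finset.card_attach]
  calc (iMarkOptions (Finset.Icc 1 (t-1)) {2} n).card
      ≤ (((Finset.Icc 1 (t-1)).filter (fun s => 1 ≤ s ∧ s ≤ n)).image (fun s => n - s)).card
        + ((({2} : Finset ℕ).filter (fun d => 2 ≤ d ∧ d ∣ n ∧ 1 ≤ n)).image (fun d => n / d)).card :=
        Finset.card_union_le _ _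
    _ ≤ ((Finset.Icc 1 (t-1)).filter (fun s => 1 ≤ s ∧ s ≤ n)).card
        + (({2} : Finset ℕ).filter (fun d => 2 ≤ d ∧ d ∣ n ∧ 1 ≤ n)).card :=
        Nat.add_le_add Finset.card_image_le Finset.card_image_le
    _ ≤ (Finset.Icc 1 (t-1)).card + ({2} : Finset ℕ).card :=
        Nat.add_le_add (Finset.card_filter_le _ _) (Finset.card_filter_le _ _)
    _ ≤ t := by
        rw [Nat.card_Icc, Finset.card_singleton]
        omega

def Gd (t r g : ℕ) : Prop :=
  (r = 0 ∧ (g = t-1 ∨ g = t)) ∨ (r = 1 ∧ g = 0) ∨ (r = 2 ∧ g = 2) ∨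
  (r = 3 ∧ g = 1) ∨ (4 ≤ r ∧ g = r-1)

lemma qr_unique {t q1 r1 q2 r2 : ℕ} (ht : 0 < t) (h : q1*t+r1 = q2*t+r2)
    (h1 : r1 < t) (h2 : r2 < t) : q1 = q2 ∧ r1 = r2 := by
  have e : ∀ q r : ℕ, r < t → (q*t+r)/t = q := by
    intro q r hrr
    rw [mul_comm, Nat.mul_add_div ht, Nat.div_eq_of_lt hrr, add_zero]
  have hq : q1 = q2 := by
    rw [← e q1 r1 h1, ← e q2 r2 h2, h]
  subst hq
  exact ⟨rfl, by omega⟩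

lemma half_decomp {t q r q2 r2 : ℕ} (ht : 0 < t) (hn : q*t + r = 2*(q2*t + r2))
    (hr : r < t) (hr2 : r2 < t) :
    (q = 2*q2 ∧ r = 2*r2) ∨ (q = 2*q2+1 ∧ r + t = 2*r2) := by
  rcases Nat.lt_or_ge (2*r2) t with h | h
  · left
    have he : q*t + r = (2*q2)*t + (2*r2) := by
      have : (2*q2)*t = 2*(q2*t) := by ring
      omega
    exact qr_unique ht he hr h
  · right
    have he : q*t + r = (2*q2+1)*t + (2*r2 - t) := by
      have : (2*q2+1)*t = 2*(q2*t) + t := by ring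
      omega
    obtain ⟨h1, h2⟩ := qr_unique ht he hr (by omega)
    omega

lemma pred_mul {q : ℕ} (t : ℕ) (hq : 1 ≤ q) : (q-1)*t + t = q*t := by
  cases q with
  | zero => omega
  | succ k => simp [Nat.succ_sub_one]; ring

def spec (t n gv : ℕ) : Prop :=
  ∃ q r, n = q*t + r ∧ r < t ∧ ((q < 2 ∧ gv = r) ∨ (2 ≤ q ∧ Gd t r gv))

lemma main_spec (t : ℕ) (ht : 4 ≤ t) :
    ∀ n, spec t n (grundy (Finset.Icc 1 (t-1)) {2} n) := by
  intro n
  induction n using Nat.strong_induction_on with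
  | _ n ih =>
  have ht0 : 0 < t := by omega
  obtain ⟨q, r, hn, hr⟩ : ∃ q r, n = q*t + r ∧ r < t :=
    ⟨n / t, n % t, by rw [mul_comm]; exact (Nat.div_add_mod n t).symm, Nat.mod_lt _ ht0⟩
  refine ⟨q, r, hn, hr, ?_⟩
  have key : ∀ m a b, m < n → m = a*t + b → b < t →
      ((a < 2 ∧ grundy (Finset.Icc 1 (t-1)) {2} m = b) ∨
       (2 ≤ a ∧ Gd t b (grundy (Finset.Icc 1 (t-1)) {2} m))) := by
    intro m a b hm hab hb
    obtain ⟨q', r', h1, h2, h3⟩ := ih m hm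
    obtain ⟨hq', hr'⟩ := qr_unique ht0 (hab.symm.trans h1) hb h2
    subst hq'; subst hr'
    exact h3
  have keyval : ∀ m a b, m < n → m = a*t + b → b < t → a < 2 →
      grundy (Finset.Icc 1 (t-1)) {2} m = b := by
    intro m a b h1 h2 h3 h4
    rcases key m a b h1 h2 h3 with ⟨_, h⟩ | ⟨h, _⟩
    · exact h
    · omega
  have keyG : ∀ m a b, m < n → m = a*t + b → b < t → 2 ≤ a →
      Gd t b (grundy (Finset.Icc 1 (t-1)) {2} m) := by
    intro m a b h1 h2 h3 h4
    rcases key m a b h1 h2 h3 with ⟨h, _⟩ | ⟨_, h⟩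
    · omega
    · exact h
  rcases Nat.lt_or_ge q 2 with hq | hq
  · -- q < 2
    left
    refine ⟨hq, ?_⟩
    rcases (by omega : q = 0 ∨ q = 1) with rfl | rfl
    · -- q = 0 : n = r < t
      rw [grundy_eq_iff]
      constructor
      · rintro (⟨s, hs1, hs2, hs3, hgs⟩ | ⟨hdvd, hn1, hgd⟩)
        · have := keyval (n - s) 0 (r - s) (by omega) (by omega) (by omega) (by omega)
          omega
        · have h2m : n = 2*(n/2) := by omega
          have := keyval (n/2) 0 (n/2) (by omega) (by omega) (by omega) (by omega)
          omega
      · intro b hb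
        refine Or.inl ⟨r - b, by omega, by omega, by omega, ?_⟩
        exact keyval (n - (r - b)) 0 b (by omega) (by omega) (by omega) (by omega)
    · -- q = 1 : n = t + r
      rw [grundy_eq_iff]
      constructor
      · rintro (⟨s, hs1, hs2, hs3, hgs⟩ | ⟨hdvd, hn1, hgd⟩)
        · rcases le_or_gt s r with hc | hc
          · have := keyval (n - s) 1 (r - s) (by omega) (by omega) (by omega) (by omega)
            omega
          · have := keyval (n - s) 0 (t + r - s) (by omega) (by omega) (by omega) (by omega)
            omega
        · have h2m : n = 2*(n/2) := by omega
          have := keyval (n/2) 0 (n/2) (by omega) (by omega) (by omega) (by omega)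
          omega
      · intro b hb
        refine Or.inl ⟨r - b, by omega, by omega, by omega, ?_⟩
        have := keyval (n - (r - b)) 1 b (by omega) (by omega) (by omega) (by omega)
        exact this
  · -- q ≥ 2
    right
    refine ⟨hq, ?_⟩
    have h2t : 2*t ≤ q*t := Nat.mul_le_mul_right t hq
    have hpm : (q-1)*t + t = q*t := pred_mul t (by omega)
    -- structured option analysis
    have optval : ∀ k, Opt t n k →
        (∃ ρ, ρ < r ∧ Gd t ρ k) ∨
        (∃ ρ, r < ρ ∧ ρ < t ∧ ((q = 2 ∧ k = ρ) ∨ (3 ≤ q ∧ Gd t ρ k))) ∨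
        (∃ q2 r2, n = 2*(q2*t + r2) ∧ r2 < t ∧
          ((q2 < 2 ∧ k = r2) ∨ (2 ≤ q2 ∧ Gd t r2 k)) ∧
          ((q = 2*q2 ∧ r = 2*r2) ∨ (q = 2*q2+1 ∧ r + t = 2*r2))) := by
      rintro k (⟨s, hs1, hs2, hs3, hgs⟩ | ⟨hdvd, hn1, hgd⟩)
      · rcases le_or_gt s r with hc | hc
        · left
          refine ⟨r - s, by omega, ?_⟩
          have := keyG (n - s) q (r - s) (by omega) (by omega) (by omega) hq
          rwa [hgs] at this
        · right; left
          refine ⟨t + r - s, by omega, by omega, ?_⟩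
          rcases Nat.lt_or_ge q 3 with hq3 | hq3
          · left
            refine ⟨by omega, ?_⟩
            have := keyval (n - s) (q-1) (t + r - s) (by omega) (by omega) (by omega) (by omega)
            omega
          · right
            refine ⟨hq3, ?_⟩
            have := keyG (n - s) (q-1) (t + r - s) (by omega) (by omega) (by omega) (by omega)
            rwa [hgs] at this
      · have h2m : n = 2*(n/2) := by omega
        obtain ⟨q2, r2, hm, hr2⟩ : ∃ q2 r2, n/2 = q2*t + r2 ∧ r2 < t :=
          ⟨(n/2) / t, (n/2) % t, by rw [mul_comm]; exact (Nat.div_add_mod _ t).symm,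
           Nat.mod_lt _ ht0⟩
        right; right
        refine ⟨q2, r2, by omega, hr2, ?_, half_decomp ht0 (by omega) hr hr2⟩
        rcases key (n/2) q2 r2 (by omega) hm hr2 with ⟨h1, h2⟩ | ⟨h1, h2⟩
        · exact Or.inl ⟨h1, by omega⟩
        · rw [hgd] at h2
          exact Or.inr ⟨h1, h2⟩
    rcases (by omega : r = 0 ∨ r = 1 ∨ r = 2 ∨ r = 3 ∨ 4 ≤ r) with rfl | rfl | rfl | rfl | hr4
    · -- r = 0 : g n ∈ {t-1, t}
      refine Or.inl ⟨rfl, ?_⟩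
      have upper : grundy (Finset.Icc 1 (t-1)) {2} n ≤ t := grundy_le t n (by omega)
      have lower : t - 1 ≤ grundy (Finset.Icc 1 (t-1)) {2} n := by
        apply le_grundy_of
        intro b hb
        rcases Nat.lt_or_ge q 3 with hq3 | hq3
        · -- q = 2, n = 2t
          have hq2 : q = 2 := by omega
          subst hq2
          rcases Nat.eq_zero_or_pos b with rfl | hb1
          · refine Or.inr ⟨by omega, by omega, ?_⟩
            have hhalf : n / 2 = t := by omega
            rw [hhalf]
            exact keyval t 1 0 (by omega) (by omega) (by omega) (by omega)
          · refine Or.inl ⟨t - b, by omega, by omega, by omega, ?_⟩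
            exact keyval (n - (t - b)) 1 b (by omega) (by omega) (by omega) (by omega)
        · -- q ≥ 3
          have h3t : 3*t ≤ q*t := Nat.mul_le_mul_right t hq3
          rcases (by omega : b = 0 ∨ b = 1 ∨ b = 2 ∨ 3 ≤ b) with rfl | rfl | rfl | hb3
          · refine Or.inl ⟨t - 1, by omega, by omega, by omega, ?_⟩
            have := keyG (n - (t-1)) (q-1) 1 (by omega) (by omega) (by omega) (by omega)
            rcases this with ⟨h1,h2|h2⟩|⟨h1,h2⟩|⟨h1,h2⟩|⟨h1,h2⟩|⟨h1,h2⟩ <;> omega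
          · refine Or.inl ⟨t - 3, by omega, by omega, by omega, ?_⟩
            have := keyG (n - (t-3)) (q-1) 3 (by omega) (by omega) (by omega) (by omega)
            rcases this with ⟨h1,h2|h2⟩|⟨h1,h2⟩|⟨h1,h2⟩|⟨h1,h2⟩|⟨h1,h2⟩ <;> omega
          · refine Or.inl ⟨t - 2, by omega, by omega, by omega, ?_⟩
            have := keyG (n - (t-2)) (q-1) 2 (by omega) (by omega) (by omega) (by omega)
            rcases this with ⟨h1,h2|h2⟩|⟨h1,h2⟩|⟨h1,h2⟩|⟨h1,h2⟩|⟨h1,h2⟩ <;> omega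
          · refine Or.inl ⟨t - (b+1), by omega, by omega, by omega, ?_⟩
            have := keyG (n - (t-(b+1))) (q-1) (b+1) (by omega) (by omega) (by omega) (by omega)
            rcases this with ⟨h1,h2|h2⟩|⟨h1,h2⟩|⟨h1,h2⟩|⟨h1,h2⟩|⟨h1,h2⟩ <;> omega
      omega
    · -- r = 1 : g n = 0
      refine Or.inr (Or.inl ⟨rfl, ?_⟩)
      rw [grundy_eq_iff]
      refine ⟨?_, fun b hb => absurd hb (by omega)⟩
      intro hopt
      rcases optval 0 hopt with ⟨ρ, hρ, hG⟩ | ⟨ρ, h1, h2, ⟨h3,h4⟩|⟨h3,hG⟩⟩ |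
        ⟨q2, r2, e1, e2, ⟨h3,h4⟩|⟨h3,hG⟩, ⟨h5,h6⟩|⟨h5,h6⟩⟩
      · rcases hG with ⟨g1,g2|g2⟩|⟨g1,g2⟩|⟨g1,g2⟩|⟨g1,g2⟩|⟨g1,g2⟩ <;> omega
      · omega
      · rcases hG with ⟨g1,g2|g2⟩|⟨g1,g2⟩|⟨g1,g2⟩|⟨g1,g2⟩|⟨g1,g2⟩ <;> omega
      · omega
      · omega
      · rcases hG with ⟨g1,g2|g2⟩|⟨g1,g2⟩|⟨g1,g2⟩|⟨g1,g2⟩|⟨g1,g2⟩ <;> omega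
      · rcases hG with ⟨g1,g2|g2⟩|⟨g1,g2⟩|⟨g1,g2⟩|⟨g1,g2⟩|⟨g1,g2⟩ <;> omega
    · -- r = 2 : g n = 2
      refine Or.inr (Or.inr <| Or.inl ⟨rfl, ?_⟩)
      rw [grundy_eq_iff]
      constructor
      · intro hopt
        rcases optval 2 hopt with ⟨ρ, hρ, hG⟩ | ⟨ρ, h1, h2, ⟨h3,h4⟩|⟨h3,hG⟩⟩ |
          ⟨q2, r2, e1, e2, ⟨h3,h4⟩|⟨h3,hG⟩, ⟨h5,h6⟩|⟨h5,h6⟩⟩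
        · rcases hG with ⟨g1,g2|g2⟩|⟨g1,g2⟩|⟨g1,g2⟩|⟨g1,g2⟩|⟨g1,g2⟩ <;> omega
        · omega
        · rcases hG with ⟨g1,g2|g2⟩|⟨g1,g2⟩|⟨g1,g2⟩|⟨g1,g2⟩|⟨g1,g2⟩ <;> omega
        · omega
        · omega
        · rcases hG with ⟨g1,g2|g2⟩|⟨g1,g2⟩|⟨g1,g2⟩|⟨g1,g2⟩|⟨g1,g2⟩ <;> omega
        · rcases hG with ⟨g1,g2|g2⟩|⟨g1,g2⟩|⟨g1,g2⟩|⟨g1,g2⟩|⟨g1,g2⟩ <;> omega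
      · intro b hb
        rcases (by omega : b = 0 ∨ b = 1) with rfl | rfl
        · refine Or.inl ⟨1, by omega, by omega, by omega, ?_⟩
          have := keyG (n - 1) q 1 (by omega) (by omega) (by omega) hq
          rcases this with ⟨g1,g2|g2⟩|⟨g1,g2⟩|⟨g1,g2⟩|⟨g1,g2⟩|⟨g1,g2⟩ <;> omega
        · rcases Nat.lt_or_ge q 3 with hq3 | hq3
          · have hq2 : q = 2 := by omega
            subst hq2
            refine Or.inr ⟨by omega, by omega, ?_⟩
            have hhalf : n / 2 = t + 1 := by omega
            rw [hhalf]
            exact keyval (t+1) 1 1 (by omega) (by omega) (by omega) (by omega)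
          · have h3t : 3*t ≤ q*t := Nat.mul_le_mul_right t hq3
            refine Or.inl ⟨t - 1, by omega, by omega, by omega, ?_⟩
            have := keyG (n - (t-1)) (q-1) 3 (by omega) (by omega) (by omega) (by omega)
            rcases this with ⟨g1,g2|g2⟩|⟨g1,g2⟩|⟨g1,g2⟩|⟨g1,g2⟩|⟨g1,g2⟩ <;> omega
    · -- r = 3 : g n = 1
      refine Or.inr (Or.inr <| Or.inr <| Or.inl ⟨rfl, ?_⟩)
      rw [grundy_eq_iff]
      constructor
      · intro hopt
        rcases optval 1 hopt with ⟨ρ, hρ, hG⟩ | ⟨ρ, h1, h2, ⟨h3,h4⟩|⟨h3,hG⟩⟩ |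
          ⟨q2, r2, e1, e2, ⟨h3,h4⟩|⟨h3,hG⟩, ⟨h5,h6⟩|⟨h5,h6⟩⟩
        · rcases hG with ⟨g1,g2|g2⟩|⟨g1,g2⟩|⟨g1,g2⟩|⟨g1,g2⟩|⟨g1,g2⟩ <;> omega
        · omega
        · rcases hG with ⟨g1,g2|g2⟩|⟨g1,g2⟩|⟨g1,g2⟩|⟨g1,g2⟩|⟨g1,g2⟩ <;> omega
        · omega
        · omega
        · rcases hG with ⟨g1,g2|g2⟩|⟨g1,g2⟩|⟨g1,g2⟩|⟨g1,g2⟩|⟨g1,g2⟩ <;> omega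
        · rcases hG with ⟨g1,g2|g2⟩|⟨g1,g2⟩|⟨g1,g2⟩|⟨g1,g2⟩|⟨g1,g2⟩ <;> omega
      · intro b hb
        have hb0 : b = 0 := by omega
        subst hb0
        refine Or.inl ⟨2, by omega, by omega, by omega, ?_⟩
        have := keyG (n - 2) q 1 (by omega) (by omega) (by omega) hq
        rcases this with ⟨g1,g2|g2⟩|⟨g1,g2⟩|⟨g1,g2⟩|⟨g1,g2⟩|⟨g1,g2⟩ <;> omega
    · -- r ≥ 4 : g n = r - 1
      refine Or.inr (Or.inr <| Or.inr <| Or.inr ⟨hr4, ?_⟩)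
      rw [grundy_eq_iff]
      constructor
      · intro hopt
        rcases optval (r-1) hopt with ⟨ρ, hρ, hG⟩ | ⟨ρ, h1, h2, ⟨h3,h4⟩|⟨h3,hG⟩⟩ |
          ⟨q2, r2, e1, e2, ⟨h3,h4⟩|⟨h3,hG⟩, ⟨h5,h6⟩|⟨h5,h6⟩⟩
        · rcases hG with ⟨g1,g2|g2⟩|⟨g1,g2⟩|⟨g1,g2⟩|⟨g1,g2⟩|⟨g1,g2⟩ <;> omega
        · omega
        · rcases hG with ⟨g1,g2|g2⟩|⟨g1,g2⟩|⟨g1,g2⟩|⟨g1,g2⟩|⟨g1,g2⟩ <;> omega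
        · omega
        · omega
        · rcases hG with ⟨g1,g2|g2⟩|⟨g1,g2⟩|⟨g1,g2⟩|⟨g1,g2⟩|⟨g1,g2⟩ <;> omega
        · rcases hG with ⟨g1,g2|g2⟩|⟨g1,g2⟩|⟨g1,g2⟩|⟨g1,g2⟩|⟨g1,g2⟩ <;> omega
      · intro b hb
        rcases (by omega : b = 0 ∨ b = 1 ∨ b = 2 ∨ 3 ≤ b) with rfl | rfl | rfl | hb3
        · refine Or.inl ⟨r - 1, by omega, by omega, by omega, ?_⟩
          have := keyG (n - (r-1)) q 1 (by omega) (by omega) (by omega) hq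
          rcases this with ⟨g1,g2|g2⟩|⟨g1,g2⟩|⟨g1,g2⟩|⟨g1,g2⟩|⟨g1,g2⟩ <;> omega
        · refine Or.inl ⟨r - 3, by omega, by omega, by omega, ?_⟩
          have := keyG (n - (r-3)) q 3 (by omega) (by omega) (by omega) hq
          rcases this with ⟨g1,g2|g2⟩|⟨g1,g2⟩|⟨g1,g2⟩|⟨g1,g2⟩|⟨g1,g2⟩ <;> omega
        · refine Or.inl ⟨r - 2, by omega, by omega, by omega, ?_⟩
          have := keyG (n - (r-2)) q 2 (by omega) (by omega) (by omega) hq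
          rcases this with ⟨g1,g2|g2⟩|⟨g1,g2⟩|⟨g1,g2⟩|⟨g1,g2⟩|⟨g1,g2⟩ <;> omega
        · refine Or.inl ⟨r - (b+1), by omega, by omega, by omega, ?_⟩
          have := keyG (n - (r-(b+1))) q (b+1) (by omega) (by omega) (by omega) hq
          rcases this with ⟨g1,g2|g2⟩|⟨g1,g2⟩|⟨g1,g2⟩|⟨g1,g2⟩|⟨g1,g2⟩ <;> omega

/-- Sprague-Grundy values of i-Mark([1,t-1],{2}) for t ≥ 4. -/
theorem iMark_t_2_grundy (t : ℕ) (ht : 4 ≤ t) (n q r : ℕ) (hn : n = q * t + r) (hr : r < t) :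
    (((q < 2 ∧ r = 0) ∨ (2 ≤ q ∧ r = 1)) → grundy (Finset.Icc 1 (t - 1)) {2} n = 0) ∧
    ((q < 2 ∧ r ≠ 0) → grundy (Finset.Icc 1 (t - 1)) {2} n = r) ∧
    ((2 ≤ q ∧ r = 2) → grundy (Finset.Icc 1 (t - 1)) {2} n = 2) ∧
    ((2 ≤ q ∧ r = 3) → grundy (Finset.Icc 1 (t - 1)) {2} n = 1) ∧
    ((2 ≤ q ∧ 3 < r) → grundy (Finset.Icc 1 (t - 1)) {2} n = r - 1) ∧
    ((2 ≤ q ∧ r = 0) →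
      grundy (Finset.Icc 1 (t - 1)) {2} n = t - 1 ∨ grundy (Finset.Icc 1 (t - 1)) {2} n = t) := by
  obtain ⟨q', r', h1, h2, h3⟩ := main_spec t ht n
  obtain ⟨h4, h5⟩ := qr_unique (show 0 < t by omega) (hn.symm.trans h1) hr h2
  subst h4; subst h5
  refine ⟨fun h => ?_, fun h => ?_, fun h => ?_, fun h => ?_, fun h => ?_, fun h => ?_⟩
  · rcases h with h | h <;>
      rcases h3 with ⟨hql, hge⟩ | ⟨hqg, ⟨g1,g2|g2⟩|⟨g1,g2⟩|⟨g1,g2⟩|⟨g1,g2⟩|⟨g1,g2⟩⟩ <;> omega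
  · rcases h3 with ⟨hql, hge⟩ | ⟨hqg, ⟨g1,g2|g2⟩|⟨g1,g2⟩|⟨g1,g2⟩|⟨g1,g2⟩|⟨g1,g2⟩⟩ <;> omega
  · rcases h3 with ⟨hql, hge⟩ | ⟨hqg, ⟨g1,g2|g2⟩|⟨g1,g2⟩|⟨g1,g2⟩|⟨g1,g2⟩|⟨g1,g2⟩⟩ <;> omega
  · rcases h3 with ⟨hql, hge⟩ | ⟨hqg, ⟨g1,g2|g2⟩|⟨g1,g2⟩|⟨g1,g2⟩|⟨g1,g2⟩|⟨g1,g2⟩⟩ <;> omega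
  · rcases h3 with ⟨hql, hge⟩ | ⟨hqg, ⟨g1,g2|g2⟩|⟨g1,g2⟩|⟨g1,g2⟩|⟨g1,g2⟩|⟨g1,g2⟩⟩ <;> omega
  · rcases h3 with ⟨hql, hge⟩ | ⟨hqg, ⟨g1,g2|g2⟩|⟨g1,g2⟩|⟨g1,g2⟩|⟨g1,g2⟩|⟨g1,g2⟩⟩ <;> omega
end
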